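/- Let F be a differential field of characteristic zero with field of constants C, let f_2, …, f_n ∈ F be nonzero, and let A be the n×n matrix over F with entries A_{i,i+1} = 1/f_{n-i+1} for 1 ≤ i ≤ n−1 and all other entries zero. Suppose T = (t_{i,j}) is an upper unitriangular matrix over a differential field extension E of F with T' = A·T. Then the entries t_{1,1}, t_{1,2}, …, t_{1,n} of the first row of T are linearly independent over the constants C of E. -/

import Mathlib

/-- if `A` is the matrix with superdiagonal entries `1/f_{n-i+1}`
(`f₂,…,f_n` nonzero in `F`) and `T` is an upper unitriangular matrix over a
differential field extension `E` with `T' = A·T`, then the entries of the first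
row of `T` are linearly independent over the constants of `E`. -/
theorem stmt_5 (F E : Type*) [Field F] [Field E] [Algebra F E] [CharZero F]
    (DE : E → E)
    (hEadd : ∀ a b : E, DE (a + b) = DE a + DE b)
    (hEmul : ∀ a b : E, DE (a * b) = a * DE b + DE a * b)
    (n : ℕ) (hn : 1 ≤ n)
    (f : ℕ → F) (hf : ∀ k, 2 ≤ k → k ≤ n → f k ≠ 0)
    (A : Matrix (Fin n) (Fin n) E)
    (hA : ∀ i j : Fin n,
      A i j = if (j : ℕ) = (i : ℕ) + 1 then (algebraMap F E (f (n - (i : ℕ))))⁻¹ else 0)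
    (T : Matrix (Fin n) (Fin n) E)
    (hT1 : ∀ i, T i i = 1)
    (hT0 : ∀ i j : Fin n, (j : ℕ) < (i : ℕ) → T i j = 0)
    (hT' : ∀ i j : Fin n, DE (T i j) = (A * T) i j)
    (c : Fin n → E) (hc : ∀ i, DE (c i) = 0)
    (hrel : ∑ i : Fin n, c i * T ⟨0, hn⟩ i = 0) :
    ∀ i, c i = 0 := by
  have hDE0 : DE 0 = 0 := by
    have := hEadd 0 0
    simp only [add_zero] at this
    exact (add_eq_left.mp this.symm)
  have hDsum : ∀ (g : Fin n → E), DE (∑ i : Fin n, g i) = ∑ i : Fin n, DE (g i) := by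
    intro g
    exact map_sum (AddMonoidHom.mk' DE hEadd) g Finset.univ
  -- Step 1: all row sums vanish
  have key : ∀ m (hm : m < n), ∑ i : Fin n, c i * T ⟨m, hm⟩ i = 0 := by
    intro m
    induction m with
    | zero => intro hm; exact hrel
    | succ m ih =>
      intro hm
      have hm' : m < n := by omega
      have hSm := ih hm'
      set k : Fin n := ⟨m, hm'⟩
      set k1 : Fin n := ⟨m + 1, hm⟩
      have hAk : ∀ j : Fin n, A k j = if j = k1 then (algebraMap F E (f (n - m)))⁻¹ else 0 := by
        intro j
        rw [hA]
        by_cases h : j = k1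
        · subst h; simp [k, k1]
        · have : (j : ℕ) ≠ m + 1 := by
            intro hj
            exact h (Fin.ext hj)
          simp [k, this, h]
      have hAT : ∀ i : Fin n, (A * T) k i = (algebraMap F E (f (n - m)))⁻¹ * T k1 i := by
        intro i
        rw [Matrix.mul_apply]
        rw [Finset.sum_eq_single k1]
        · rw [hAk]; simp
        · intro b _ hb; rw [hAk]; simp [hb]
        · intro h; exact absurd (Finset.mem_univ k1) h
      have hderiv : DE (∑ i : Fin n, c i * T k i)
          = (algebraMap F E (f (n - m)))⁻¹ * ∑ i : Fin n, c i * T k1 i := by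
        rw [hDsum, Finset.mul_sum]
        apply Finset.sum_congr rfl
        intro i _
        rw [hEmul, hc, hT', hAT]
        ring
      have h0 : (algebraMap F E (f (n - m)))⁻¹ * ∑ i : Fin n, c i * T k1 i = 0 := by
        rw [← hderiv, hSm, hDE0]
      have hfne : f (n - m) ≠ 0 := hf _ (by omega) (by omega)
      have hne : (algebraMap F E (f (n - m)))⁻¹ ≠ 0 := by
        apply inv_ne_zero
        exact fun h => hfne ((map_eq_zero _).mp h)
      exact (mul_eq_zero.mp h0).resolve_left hne
  -- Step 2: if all later coefficients vanish, so does c k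
  have main : ∀ k : Fin n, (∀ i : Fin n, (k : ℕ) < (i : ℕ) → c i = 0) → c k = 0 := by
    intro k hk
    have hS : ∑ i : Fin n, c i * T k i = 0 := by
      have := key k.1 k.2
      simpa using this
    rw [Finset.sum_eq_single k] at hS
    · rw [hT1, mul_one] at hS; exact hS
    · intro b _ hb
      rcases lt_or_gt_of_ne (fun h : (b : ℕ) = (k : ℕ) => hb (Fin.ext h)) with h | h
      · rw [hT0 k b h, mul_zero]
      · rw [hk b h, zero_mul]
    · intro h; exact absurd (Finset.mem_univ k) h
  -- Step 3: downward induction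
  have down : ∀ j : ℕ, ∀ k : Fin n, n ≤ (k : ℕ) + j + 1 → c k = 0 := by
    intro j
    induction j with
    | zero =>
      intro k hk
      apply main k
      intro i hi
      exact absurd i.isLt (by omega)
    | succ j ih =>
      intro k hk
      apply main k
      intro i hi
      exact ih i (by omega)
  exact fun k => down n k (by omega)
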